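/- arXiv:0907.2831 — 2 statements merged into one kernel-verified Lean document; each statement's English description precedes it below -/
import Mathlib

section
/- Szemerédi's theorem (r_k(n) = o(n)) for a fixed k ≥ 3 is equivalent to the statement lim_{D→∞} α_{k,D} = 0, where α_{k,D} = lim_{n→∞} R_{k,D}(n)/n. -/
/-- `S` contains a `k`-term arithmetic progression with common difference `d`,
starting at some `i ≥ 1`. -/
def HasAPd (S : Finset ℕ) (k d : ℕ) : Prop :=
  ∃ i : ℕ, 1 ≤ i ∧ ∀ j < k, i + j * d ∈ S

/-- `S ⊆ {1,…,n}` and `S` contains no `k`-term AP with common difference `d`,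
`1 ≤ d ≤ D`. -/
def AvoidsAP (k D n : ℕ) (S : Finset ℕ) : Prop :=
  S ⊆ Finset.Icc 1 n ∧ ∀ d : ℕ, 1 ≤ d → d ≤ D → ¬ HasAPd S k d

/-- `R k D n` : maximum cardinality of such an `S`. -/
noncomputable def R (k D n : ℕ) : ℕ :=
  sSup {m : ℕ | ∃ S : Finset ℕ, AvoidsAP k D n S ∧ S.card = m}

/-- `S ⊆ {1,…,n}` contains no `k`-term AP with any common difference `d ≥ 1`. -/
def AvoidsAPAll (k n : ℕ) (S : Finset ℕ) : Prop :=
  S ⊆ Finset.Icc 1 n ∧ ∀ d : ℕ, 1 ≤ d → ¬ HasAPd S k d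

/-- `r k n` : maximum cardinality of a subset of `{1,…,n}` with no `k`-term AP. -/
noncomputable def rS (k n : ℕ) : ℕ :=
  sSup {m : ℕ | ∃ S : Finset ℕ, AvoidsAPAll k n S ∧ S.card = m}

open Finset Filter

lemma hasAPd_empty {k d : ℕ} (hk : 1 ≤ k) : ¬ HasAPd ∅ k d := by
  rintro ⟨i, hi, h⟩
  simpa using h 0 (by omega)

lemma bdd_R (k D n : ℕ) :
    n ∈ upperBounds {m : ℕ | ∃ S : Finset ℕ, AvoidsAP k D n S ∧ S.card = m} := by
  rintro m ⟨S, hS, rfl⟩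
  calc S.card ≤ (Finset.Icc 1 n).card := Finset.card_le_card hS.1
    _ = n := by simp

lemma bdd_rS (k n : ℕ) :
    n ∈ upperBounds {m : ℕ | ∃ S : Finset ℕ, AvoidsAPAll k n S ∧ S.card = m} := by
  rintro m ⟨S, hS, rfl⟩
  calc S.card ≤ (Finset.Icc 1 n).card := Finset.card_le_card hS.1
    _ = n := by simp

lemma card_le_R {k D n : ℕ} {S : Finset ℕ} (h : AvoidsAP k D n S) : S.card ≤ R k D n :=
  le_csSup ⟨n, bdd_R k D n⟩ ⟨S, h, rfl⟩

lemma card_le_rS {k n : ℕ} {S : Finset ℕ} (h : AvoidsAPAll k n S) : S.card ≤ rS k n :=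
  le_csSup ⟨n, bdd_rS k n⟩ ⟨S, h, rfl⟩

lemma R_le {k D n m : ℕ} (hk : 1 ≤ k)
    (h : ∀ S : Finset ℕ, AvoidsAP k D n S → S.card ≤ m) : R k D n ≤ m := by
  refine csSup_le ⟨0, ∅, ⟨by simp, fun d _ _ => hasAPd_empty hk⟩, by simp⟩ ?_
  rintro x ⟨S, hS, rfl⟩
  exact h S hS

lemma rS_le_R {k D n : ℕ} (hk : 1 ≤ k) : rS k n ≤ R k D n := by
  refine csSup_le ⟨0, ∅, ⟨by simp, fun d _ => hasAPd_empty hk⟩, by simp⟩ ?_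
  rintro x ⟨S, hS, rfl⟩
  exact card_le_R ⟨hS.1, fun d hd _ => hS.2 d hd⟩

/-- Block bound: intersection of an AP-avoiding set with a window of length `L = (k-1)*D+1`,
translated back to `[1, L]`, avoids all APs. -/
lemma block_bound {k D n : ℕ} (hk : 3 ≤ k) {S : Finset ℕ} (hS : AvoidsAP k D n S) (j : ℕ) :
    (S ∩ Finset.Ioc (j * ((k-1)*D+1)) (j * ((k-1)*D+1) + ((k-1)*D+1))).card
      ≤ rS k ((k-1)*D+1) := by
  set L := (k-1)*D+1 with hL
  set T : Finset ℕ := (S ∩ Finset.Ioc (j*L) (j*L + L)).image (fun x => x - j*L) with hT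
  have hcard : (S ∩ Finset.Ioc (j*L) (j*L + L)).card = T.card := by
    rw [hT, Finset.card_image_of_injOn]
    intro x hx y hy hxy
    simp only [Finset.coe_inter, Finset.coe_Ioc, Set.mem_inter_iff, Set.mem_Ioc] at hx hy
    dsimp only at hxy
    omega
  rw [hcard]
  apply card_le_rS (k := k) (n := L)
  constructor
  · intro x hx
    simp only [hT, Finset.mem_image, Finset.mem_inter, Finset.mem_Ioc] at hx
    obtain ⟨y, ⟨_, hy1, hy2⟩, rfl⟩ := hx
    simp only [Finset.mem_Icc]
    omega
  · rintro d hd ⟨i, hi, hAP⟩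
    -- extract membership in S
    have hmem : ∀ j' < k, j*L + i + j' * d ∈ S ∧ i + j' * d ≤ L := by
      intro j' hj'
      have := hAP j' hj'
      simp only [hT, Finset.mem_image, Finset.mem_inter, Finset.mem_Ioc] at this
      obtain ⟨y, ⟨hyS, hy1, hy2⟩, hy3⟩ := this
      have : y = j*L + i + j' * d := by omega
      subst this
      exact ⟨hyS, by omega⟩
    -- d ≤ D
    have hlast := (hmem (k-1) (by omega)).2
    have hdD : d ≤ D := by
      have h1 : (k-1) * d ≤ (k-1) * D := by omega
      exact Nat.le_of_mul_le_mul_left h1 (by omega)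
    exact hS.2 d hd hdD ⟨j*L + i, by omega, fun j' hj' => (hmem j' hj').1⟩

/-- Key counting lemma. -/
lemma R_le_key {k D : ℕ} (hk : 3 ≤ k) (n : ℕ) :
    R k D n ≤ (n / ((k-1)*D+1) + 1) * rS k ((k-1)*D+1) := by
  set L := (k-1)*D+1 with hL
  have hLpos : 0 < L := by positivity
  apply R_le (by omega)
  intro S hS
  have hsub : S ⊆ (Finset.range (n / L + 1)).biUnion
      (fun j => S ∩ Finset.Ioc (j*L) (j*L + L)) := by
    intro x hx
    have hx' := hS.1 hx
    simp only [Finset.mem_Icc] at hx'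
    apply Finset.mem_biUnion.mpr
    refine ⟨(x-1)/L, ?_, ?_⟩
    · simp only [Finset.mem_range]
      have h1 : (x-1)/L ≤ n / L := Nat.div_le_div_right (by omega)
      omega
    · simp only [Finset.mem_inter, Finset.mem_Ioc]
      refine ⟨hx, ?_, ?_⟩
      · have := Nat.div_mul_le_self (x-1) L
        omega
      · have h1 := Nat.div_add_mod (x-1) L
        have h2 := Nat.mod_lt (x-1) hLpos
        have h3 : (x-1)/L * L = L * ((x-1)/L) := mul_comm _ _
        omega
  calc S.card ≤ _ := Finset.card_le_card hsub
    _ ≤ ∑ j ∈ Finset.range (n/L + 1), (S ∩ Finset.Ioc (j*L) (j*L + L)).card :=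
        Finset.card_biUnion_le
    _ ≤ ∑ j ∈ Finset.range (n/L + 1), rS k L :=
        Finset.sum_le_sum fun j _ => block_bound hk hS j
    _ = (n/L + 1) * rS k L := by simp [Finset.sum_const, mul_comm]

theorem szemeredi_iff_alpha_to_zero (k : ℕ) (hk : 3 ≤ k) (α : ℕ → ℝ)
    (hα : ∀ D : ℕ, 1 ≤ D →
      Filter.Tendsto (fun n : ℕ => (R k D n : ℝ) / n) Filter.atTop (nhds (α D))) :
    Filter.Tendsto (fun n : ℕ => (rS k n : ℝ) / n) Filter.atTop (nhds 0) ↔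
      Filter.Tendsto α Filter.atTop (nhds 0) := by
  constructor
  · -- szemerédi ⇒ α → 0
    intro hr
    have hL : ∀ D : ℕ, 0 < (k-1)*D+1 := fun D => by positivity
    -- α D ≥ 0
    have hα0 : ∀ D : ℕ, 1 ≤ D → 0 ≤ α D := by
      intro D hD
      refine ge_of_tendsto (hα D hD) (Filter.Eventually.of_forall fun n => ?_)
      positivity
    -- α D ≤ rS k L / L
    have hαle : ∀ D : ℕ, 1 ≤ D →
        α D ≤ (rS k ((k-1)*D+1) : ℝ) / (((k-1)*D+1 : ℕ) : ℝ) := by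
      intro D hD
      set L := (k-1)*D+1 with hLdef
      set c : ℝ := (rS k L : ℝ) with hc
      have hc0 : 0 ≤ c := Nat.cast_nonneg _
      have hLpos : (0:ℝ) < L := by exact_mod_cast hL D
      have hg : Filter.Tendsto (fun n : ℕ => c / L + c / n) Filter.atTop (nhds (c / L)) := by
        simpa using tendsto_const_nhds.add (tendsto_const_div_atTop_nhds_zero_nat c)
      refine le_of_tendsto_of_tendsto (hα D hD) hg ?_
      filter_upwards [Filter.eventually_ge_atTop 1] with n hn
      have hnpos : (0:ℝ) < n := by exact_mod_cast hn
      have h1 : (R k D n : ℝ) ≤ ((n / L : ℕ) + 1) * c := by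
        have := R_le_key (D := D) hk n
        calc (R k D n : ℝ) ≤ (((n / L + 1) * rS k L : ℕ) : ℝ) := by exact_mod_cast this
          _ = ((n / L : ℕ) + 1) * c := by push_cast; ring
      have h2 : ((n / L : ℕ) : ℝ) ≤ (n : ℝ) / L := Nat.cast_div_le
      have h3 : (R k D n : ℝ) ≤ ((n:ℝ) / L + 1) * c := by nlinarith
      calc (R k D n : ℝ) / n ≤ (((n:ℝ) / L + 1) * c) / n := by
            gcongr
        _ = c / L + c / n := by field_simp
    -- squeeze
    have htend : Filter.Tendsto (fun D : ℕ => (rS k ((k-1)*D+1) : ℝ) / (((k-1)*D+1 : ℕ) : ℝ))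
        Filter.atTop (nhds 0) := by
      apply hr.comp
      apply Filter.tendsto_atTop_mono (f := id) (fun D => ?_) Filter.tendsto_id
      simp only [id]
      have h1 : 1 ≤ k - 1 := by omega
      calc D = 1 * D := (one_mul D).symm
        _ ≤ (k-1) * D := Nat.mul_le_mul_right D h1
        _ ≤ (k-1)*D + 1 := Nat.le_succ _
    apply tendsto_of_tendsto_of_tendsto_of_le_of_le' tendsto_const_nhds htend
    · filter_upwards [Filter.eventually_ge_atTop 1] with D hD using hα0 D hD
    · filter_upwards [Filter.eventually_ge_atTop 1] with D hD using hαle D hD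
  · -- α → 0 ⇒ szemerédi
    intro hA
    rw [NormedAddCommGroup.tendsto_nhds_zero]
    intro ε hε
    have h1 : ∀ᶠ D in Filter.atTop, α D < ε := hA.eventually (gt_mem_nhds hε)
    obtain ⟨D, hD1, hDε⟩ := (h1.and (Filter.eventually_ge_atTop 1)).exists
    have h2 : ∀ᶠ n in Filter.atTop, (R k D n : ℝ) / n < ε :=
      (hα D hDε).eventually (gt_mem_nhds hD1)
    filter_upwards [h2, Filter.eventually_ge_atTop 1] with n hn hn1
    have hnpos : (0:ℝ) < n := by exact_mod_cast hn1
    have hle : (rS k n : ℝ) / n ≤ (R k D n : ℝ) / n := by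
      gcongr
      exact_mod_cast rS_le_R (D := D) (n := n) (by omega : 1 ≤ k)
    have h0 : (0:ℝ) ≤ (rS k n : ℝ) / n := by positivity
    rw [Real.norm_eq_abs, abs_of_nonneg h0]
    exact lt_of_le_of_lt hle hn
end

section
/- For even k ≥ 4 (more generally whenever the relevant periodic construction applies): α_{2m,2}= α_{2m-1,2} = (2m-2)/(2m-1) for m ≥ 2; equivalently, for every k ≥ 3, α_{k,2} = (2⌊(k-1)/2⌋)/(2⌊(k-1)/2⌋+1). -/
open Finset

/-- `x` lies in `[1,n]` but is not in `S`. -/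
def Miss (n : ℕ) (S : Finset ℕ) (x : ℕ) : Prop := x ∈ Finset.Icc 1 n ∧ x ∉ S

/-- number of missing elements in `[1,x]`. -/
def fm (S : Finset ℕ) (x : ℕ) : ℕ := ((Finset.Icc 1 x).filter (fun y => y ∉ S)).card

lemma fm_mono {S : Finset ℕ} {x y : ℕ} (h : x ≤ y) : fm S x ≤ fm S y :=
  Finset.card_le_card (Finset.filter_subset_filter _ (Finset.Icc_subset_Icc_right h))

lemma fm_succ {n : ℕ} {S : Finset ℕ} {x : ℕ} (hx : Miss n S x) :
    fm S (x - 1) + 1 ≤ fm S x := by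
  have hx1 : 1 ≤ x := (Finset.mem_Icc.mp hx.1).1
  have hnm : x ∉ (Finset.Icc 1 (x-1)).filter (fun y => y ∉ S) := by
    intro hmem
    have := (Finset.mem_Icc.mp (Finset.mem_filter.mp hmem).1).2
    omega
  have hsub : insert x ((Finset.Icc 1 (x-1)).filter (fun y => y ∉ S)) ⊆
      (Finset.Icc 1 x).filter (fun y => y ∉ S) := by
    intro y hy
    rcases Finset.mem_insert.mp hy with rfl | hy'
    · exact Finset.mem_filter.mpr ⟨Finset.mem_Icc.mpr ⟨hx1, le_rfl⟩, hx.2⟩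
    · have h2 := Finset.mem_filter.mp hy'
      have h3 := Finset.mem_Icc.mp h2.1
      exact Finset.mem_filter.mpr ⟨Finset.mem_Icc.mpr ⟨h3.1, by omega⟩, h2.2⟩
  calc fm S (x-1) + 1 = (insert x ((Finset.Icc 1 (x-1)).filter (fun y => y ∉ S))).card :=
        (Finset.card_insert_of_notMem hnm).symm
    _ ≤ _ := Finset.card_le_card hsub

lemma fm_eq {n : ℕ} {S : Finset ℕ} (hS : S ⊆ Finset.Icc 1 n) : fm S n = n - S.card := by
  have h1 : (Finset.Icc 1 n).filter (fun y => y ∉ S) = Finset.Icc 1 n \ S :=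
    (Finset.sdiff_eq_filter _ _).symm
  rw [fm, h1, Finset.card_sdiff_of_subset hS, Nat.card_Icc]
  omega

lemma mem_of_not_miss {n : ℕ} {S : Finset ℕ} {y : ℕ} (h1 : 1 ≤ y) (h2 : y ≤ n)
    (h : ¬ Miss n S y) : y ∈ S := by
  by_contra hy
  exact h ⟨Finset.mem_Icc.mpr ⟨h1, h2⟩, hy⟩

lemma no_d1 {k n : ℕ} {S : Finset ℕ} (h : AvoidsAP k 2 n S) {i : ℕ} (hi : 1 ≤ i)
    (hall : ∀ j < k, i + j ∈ S) : False := by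
  refine h.2 1 le_rfl one_le_two ⟨i, hi, fun j hj => ?_⟩
  simpa using hall j hj

lemma no_d2 {k n : ℕ} {S : Finset ℕ} (h : AvoidsAP k 2 n S) {i : ℕ} (hi : 1 ≤ i)
    (hall : ∀ j < k, i + 2 * j ∈ S) : False := by
  refine h.2 2 one_le_two le_rfl ⟨i, hi, fun j hj => ?_⟩
  have := hall j hj
  rwa [mul_comm] at this

lemma last_below {n : ℕ} {S : Finset ℕ} (x : ℕ) (hx : 0 < x) :
    ∃ b, b < x ∧ (b = 0 ∨ Miss n S b) ∧ ∀ y, b < y → y < x → ¬ Miss n S y := by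
  classical
  set T := (Finset.range x).filter (fun y => y = 0 ∨ Miss n S y) with hT
  have h0 : 0 ∈ T := Finset.mem_filter.mpr ⟨Finset.mem_range.mpr hx, Or.inl rfl⟩
  have hTne : T.Nonempty := ⟨0, h0⟩
  refine ⟨T.max' hTne, ?_, ?_, ?_⟩
  · exact Finset.mem_range.mp (Finset.mem_filter.mp (T.max'_mem hTne)).1
  · exact (Finset.mem_filter.mp (T.max'_mem hTne)).2
  · intro y h1 h2 hy
    have : y ∈ T := Finset.mem_filter.mpr ⟨Finset.mem_range.mpr h2, Or.inr hy⟩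
    have := Finset.le_max' T y this
    omega

lemma scan_gen {k n : ℕ} {S : Finset ℕ} (hk : 3 ≤ k) (h : AvoidsAP k 2 n S) :
    n ≤ k * fm S n + (k + 1) := by
  have main : ∀ x, x ≤ n → (x = 0 ∨ Miss n S x) → x ≤ k * fm S x := by
    intro x
    induction x using Nat.strong_induction_on with
    | _ x ih =>
      intro hxn hx0
      rcases hx0 with rfl | hmx
      · simp
      have hx1 : 1 ≤ x := (Finset.mem_Icc.mp hmx.1).1
      obtain ⟨b, hbx, hb0, hnom⟩ := last_below x hx1
      have hIH : b ≤ k * fm S b := ih b hbx (by omega) hb0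
      have hgap : x ≤ b + k := by
        by_contra hg
        push_neg at hg
        refine no_d1 h (i := b + 1) (by omega) ?_
        intro j hj
        exact mem_of_not_miss (by omega) (by omega) (hnom (b+1+j) (by omega) (by omega))
      have hfb : fm S b + 1 ≤ fm S x :=
        le_trans (by have := fm_mono (S := S) (show b ≤ x - 1 by omega); omega) (fm_succ hmx)
      have hmul : k * fm S b + k ≤ k * fm S x := by
        calc k * fm S b + k = k * (fm S b + 1) := by ring
          _ ≤ k * fm S x := Nat.mul_le_mul_left _ hfb
      omega
  obtain ⟨b, hb, hb0, hnom⟩ := last_below (n := n) (S := S) (n + 1) (by omega)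
  have hst := main b (by omega) hb0
  have hgap : n + 1 ≤ b + k := by
    by_contra hg
    push_neg at hg
    refine no_d1 h (i := b + 1) (by omega) ?_
    intro j hj
    exact mem_of_not_miss (by omega) (by omega) (hnom (b+1+j) (by omega) (by omega))
  have hmul : k * fm S b ≤ k * fm S n := Nat.mul_le_mul_left _ (fm_mono (by omega))
  omega

lemma scan_even {k n m : ℕ} {S : Finset ℕ} (hm : 1 ≤ m) (hk : k = 2*m + 2)
    (h : AvoidsAP k 2 n S) :
    n ≤ (2*m+1) * fm S n + (k + 1) := by
  set q := 2*m+1 with hq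
  have main : ∀ x, x ≤ n → (x = 0 ∨ Miss n S x) →
      (x ≤ q * fm S x
       ∨ (x ≤ q * fm S x + 1 ∧ ∃ a, a + q = x ∧ Miss n S a ∧
            ∀ y, a < y → y < x → ¬ Miss n S y)
       ∨ (x ≤ q * fm S x + 1 ∧ ∃ w, w + k = x ∧ (w = 0 ∨ Miss n S w) ∧
            ∀ y, w < y → y < x → ¬ Miss n S y)
       ∨ (x ≤ q * fm S x + 2 ∧ (x = n ∨ Miss n S (x+1)))) := by
    intro x
    induction x using Nat.strong_induction_on with
    | _ x ih =>
      intro hxn hx0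
      rcases hx0 with rfl | hmx
      · left; simp
      have hx1 : 1 ≤ x := (Finset.mem_Icc.mp hmx.1).1
      obtain ⟨b, hbx, hb0, hnom⟩ := last_below x hx1
      have hIH := ih b hbx (by omega) hb0
      have hgap : x ≤ b + k := by
        by_contra hg
        push_neg at hg
        refine no_d1 h (i := b + 1) (by omega) ?_
        intro j hj
        exact mem_of_not_miss (by omega) (by omega) (hnom (b+1+j) (by omega) (by omega))
      have hfb : fm S b + 1 ≤ fm S x :=
        le_trans (by have := fm_mono (S := S) (show b ≤ x - 1 by omega); omega) (fm_succ hmx)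
      have hmul : q * fm S b + q ≤ q * fm S x := by
        calc q * fm S b + q = q * (fm S b + 1) := by ring
          _ ≤ q * fm S x := Nat.mul_le_mul_left _ hfb
      -- abstract the nonlinear atoms for omega
      rcases hIH with hA | ⟨hBf, a, ha, hma, hnomB⟩ | ⟨hCf, w, hw, hmw, hnomC⟩ | ⟨hDf, hD⟩
      · -- state A at b
        by_cases hgq : x ≤ b + q
        · left; omega
        · -- gap is exactly k
          have hxk : b + k = x := by omega
          right; right; left
          exact ⟨by omega, b, hxk, hb0, hnom⟩
      · -- state B at b, with previous missing a = b - q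
        have ha1 : 1 ≤ a := (Finset.mem_Icc.mp hma.1).1
        by_cases hgq1 : x + 1 ≤ b + q
        · left; omega
        · by_cases hgq : x = b + q
          · right; left
            have hmb : Miss n S b := by
              rcases hb0 with rfl | hmb
              · exfalso; omega
              · exact hmb
            refine ⟨by omega, b, by omega, hmb, hnom⟩
          · -- gap is exactly k : forced case → state D
            have hxk : b + k = x := by omega
            right; right; right
            refine ⟨by omega, ?_⟩
            by_cases hxn' : x = n
            · exact Or.inl hxn'
            · right
              by_contra hmiss
              refine no_d2 h (i := a + 2) (by omega) ?_
              intro j hj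
              -- y = a + 2 + 2j, for j < k ; note x + 1 = a + 2k
              have hy_le : a + 2 + 2*j ≤ x + 1 := by omega
              rcases eq_or_lt_of_le hy_le with hEq | hlt
              · have : a + 2 + 2*j = x + 1 := hEq
                rw [this]
                exact mem_of_not_miss (by omega) (by omega) hmiss
              · have hyx : a + 2 + 2*j ≠ x := by omega
                have hyb : a + 2 + 2*j ≠ b := by omega
                have hy_pres : ¬ Miss n S (a + 2 + 2*j) := by
                  rcases lt_or_gt_of_ne hyb with hlt' | hgt'
                  · exact hnomB _ (by omega) hlt'
                  · exact hnom _ hgt' (by omega)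
                exact mem_of_not_miss (by omega) (by omega) hy_pres
      · -- state C at b, with previous missing w = b - k
        have hw1 : 0 ≤ w := Nat.zero_le w
        by_cases hgq1 : x + 1 ≤ b + q
        · left; omega
        · by_cases hgq : x = b + q
          · right; left
            have hmb : Miss n S b := by
              rcases hb0 with rfl | hmb
              · exfalso; omega
              · exact hmb
            exact ⟨by omega, b, by omega, hmb, hnom⟩
          · -- gap exactly k after a gap of k : contradiction
            exfalso
            have hxk : b + k = x := by omega
            refine no_d2 h (i := w + 1) (by omega) ?_
            intro j hj
            have hyb : w + 1 + 2*j ≠ b := by omega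
            have hy_lt : w + 1 + 2*j < x := by omega
            have hy_pres : ¬ Miss n S (w + 1 + 2*j) := by
              rcases lt_or_gt_of_ne hyb with hlt' | hgt'
              · exact hnomC _ (by omega) hlt'
              · exact hnom _ hgt' hy_lt
            exact mem_of_not_miss (by omega) (by omega) hy_pres
      · -- state D at b
        rcases hD with rfl | hmiss
        · omega
        · have hxb : x = b + 1 := by
            by_contra hne
            exact hnom (b+1) (by omega) (by omega) hmiss
          left; omega
  obtain ⟨b, hb, hb0, hnom⟩ := last_below (n := n) (S := S) (n + 1) (by omega)
  have hst := main b (by omega) hb0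
  have hgap : n + 1 ≤ b + k := by
    by_contra hg
    push_neg at hg
    refine no_d1 h (i := b + 1) (by omega) ?_
    intro j hj
    exact mem_of_not_miss (by omega) (by omega) (hnom (b+1+j) (by omega) (by omega))
  have hmul : q * fm S b ≤ q * fm S n := Nat.mul_le_mul_left _ (fm_mono (by omega))
  have hb2 : b ≤ q * fm S b + 2 := by
    rcases hst with h1 | ⟨h1, _⟩ | ⟨h1, _⟩ | ⟨h1, _⟩ <;> omega
  omega

lemma lower_con (k n m : ℕ) (hm : 1 ≤ m) (hk : 2*m+1 ≤ k) :
    ∃ S : Finset ℕ, AvoidsAP k 2 n S ∧ S.card = n - n / (2*m+1) := by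
  classical
  set q := 2*m+1 with hq
  haveI : NeZero q := ⟨by omega⟩
  refine ⟨(Finset.Icc 1 n).filter (fun x => ¬ (q ∣ x)), ⟨Finset.filter_subset _ _, ?_⟩, ?_⟩
  · rintro d hd1 hd2 ⟨i, hi, hall⟩
    have hcop : Nat.Coprime d q := by
      interval_cases d
      · exact Nat.coprime_one_left q
      · refine (Nat.prime_two.coprime_iff_not_dvd).mpr ?_
        rintro ⟨c, hc⟩
        omega
    have hu : IsUnit (d : ZMod q) := (ZMod.isUnit_iff_coprime d q).mpr hcop
    set e : ZMod q := (-(i : ZMod q)) * (d : ZMod q)⁻¹ with he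
    have hjlt : e.val < q := ZMod.val_lt e
    have hmem := hall e.val (by omega)
    have hdvd : q ∣ i + e.val * d := by
      have hcast : ((i + e.val * d : ℕ) : ZMod q) = 0 := by
        push_cast
        rw [ZMod.natCast_val, ZMod.cast_id, he]
        have h1 : (-(i:ZMod q)) * (d:ZMod q)⁻¹ * (d : ZMod q) = -(i:ZMod q) := by
          rw [mul_assoc, ZMod.inv_mul_of_unit _ hu, mul_one]
        rw [h1]
        ring
      exact (ZMod.natCast_eq_zero_iff _ _).mp hcast
    exact (Finset.mem_filter.mp hmem).2 hdvd
  · have hIcc : Finset.Icc 1 n = Finset.Ioc 0 n := by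
      rw [← Finset.Icc_add_one_left_eq_Ioc]; rfl
    have hdvdcard : ((Finset.Icc 1 n).filter (fun x => q ∣ x)).card = n / q := by
      rw [hIcc]
      exact Nat.Ioc_filter_dvd_card_eq_div n q
    have hsum := Finset.card_filter_add_card_filter_not
      (s := Finset.Icc 1 n) (p := fun x => q ∣ x)
    have hcard : (Finset.Icc 1 n).card = n := by rw [Nat.card_Icc]; omega
    omega

lemma R_bdd (k n : ℕ) : BddAbove {m : ℕ | ∃ S : Finset ℕ, AvoidsAP k 2 n S ∧ S.card = m} := by
  refine ⟨n, ?_⟩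
  rintro mm ⟨S, hS, rfl⟩
  have := Finset.card_le_card hS.1
  rwa [Nat.card_Icc, Nat.add_sub_cancel] at this

lemma R_ne (k n : ℕ) (hk : 3 ≤ k) :
    {m : ℕ | ∃ S : Finset ℕ, AvoidsAP k 2 n S ∧ S.card = m}.Nonempty := by
  refine ⟨0, ∅, ⟨Finset.empty_subset _, ?_⟩, Finset.card_empty⟩
  rintro d h1 h2 ⟨i, hi, hall⟩
  have := hall 0 (by omega)
  simp at this

lemma R_lower (k n m : ℕ) (hk3 : 3 ≤ k) (hm : 1 ≤ m) (hk : 2*m+1 ≤ k) :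
    n - n / (2*m+1) ≤ R k 2 n := by
  obtain ⟨S, hS, hcard⟩ := lower_con k n m hm hk
  exact le_csSup (R_bdd k n) ⟨S, hS, hcard⟩

lemma R_le_n (k n : ℕ) (hk : 3 ≤ k) : R k 2 n ≤ n := by
  have hmem := Nat.sSup_mem (R_ne k n hk) (R_bdd k n)
  obtain ⟨S, hS, hcard⟩ := hmem
  rw [R, ← hcard]
  have := Finset.card_le_card hS.1
  rwa [Nat.card_Icc, Nat.add_sub_cancel] at this

lemma R_upper (k n : ℕ) (hk : 3 ≤ k) :
    n + (2 * ((k-1)/2) + 1) * R k 2 n ≤ (2 * ((k-1)/2) + 1) * n + (k + 1) := by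
  set q := 2 * ((k-1)/2) + 1 with hq
  have hmem := Nat.sSup_mem (R_ne k n hk) (R_bdd k n)
  obtain ⟨S, hS, hcard⟩ := hmem
  have hcard' : S.card = R k 2 n := hcard
  have hfm : fm S n = n - S.card := fm_eq hS.1
  have hRn : S.card ≤ n := by
    have := Finset.card_le_card hS.1
    rwa [Nat.card_Icc, Nat.add_sub_cancel] at this
  have hscan : n ≤ q * fm S n + (k + 1) := by
    rcases Nat.even_or_odd k with he | ho
    · -- k even, k = 2m+2 with m = (k-1)/2 ≥ 1
      have hm : 1 ≤ (k-1)/2 := by omega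
      have hkeq : k = 2 * ((k-1)/2) + 2 := by
        obtain ⟨c, hc⟩ := he
        omega
      exact scan_even hm hkeq hS
    · -- k odd : q = k
      have hqk : q = k := by
        obtain ⟨c, hc⟩ := ho
        omega
      rw [hqk]
      exact scan_gen hk hS
  have hsplit : q * (n - S.card) + q * S.card = q * n := by
    rw [← Nat.mul_add, Nat.sub_add_cancel hRn]
  rw [hfm] at hscan
  rw [← hcard']
  omega

theorem alpha_D_two (k : ℕ) (hk : 3 ≤ k) :
    Filter.Tendsto (fun n : ℕ => (R k 2 n : ℝ) / n) Filter.atTop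
      (nhds ((2 * (((k - 1) / 2 : ℕ) : ℝ)) / (2 * (((k - 1) / 2 : ℕ) : ℝ) + 1))) := by
  have hm1 : 1 ≤ (k-1)/2 := by omega
  set m := (k-1)/2 with hm
  set q := 2*m+1 with hqdef
  have hqk : 2*m+1 ≤ k := by omega
  have hqpos : 0 < q := by omega
  have hq0 : (0:ℝ) < (q:ℝ) := by exact_mod_cast hqpos
  have htarget : ((q:ℝ)-1)/(q:ℝ) = (2 * (m:ℝ)) / (2 * (m:ℝ) + 1) := by
    rw [hqdef]
    push_cast
    ring_nf
  rw [← htarget]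
  have hupperlim : Filter.Tendsto
      (fun n : ℕ => ((q:ℝ)-1)/q + ((k:ℝ)+1)/q * (1/(n:ℝ))) Filter.atTop
      (nhds (((q:ℝ)-1)/q)) := by
    have hu := Filter.Tendsto.const_mul (((k:ℝ)+1)/q) tendsto_one_div_atTop_nhds_zero_nat
    have hc : Filter.Tendsto (fun _ : ℕ => ((q:ℝ)-1)/q) Filter.atTop (nhds (((q:ℝ)-1)/q)) :=
      tendsto_const_nhds
    simpa using hc.add hu
  apply tendsto_of_tendsto_of_tendsto_of_le_of_le' tendsto_const_nhds hupperlim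
  · -- lower bound eventually
    filter_upwards [Filter.eventually_ge_atTop 1] with n hn1
    have hn0 : (0:ℝ) < (n:ℝ) := by exact_mod_cast hn1
    have hlo := R_lower k n m hk hm1 hqk
    have hA : ((n/q : ℕ):ℝ) * q ≤ (n:ℝ) := by exact_mod_cast Nat.div_mul_le_self n q
    have hcast : (n:ℝ) - ((n/q:ℕ):ℝ) ≤ (R k 2 n : ℝ) := by
      have h1 : ((n - n/q : ℕ) : ℝ) ≤ (R k 2 n : ℝ) := Nat.cast_le.mpr hlo
      rwa [Nat.cast_sub (Nat.div_le_self n q)] at h1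
    rw [div_le_div_iff₀ hq0 hn0]
    nlinarith [mul_le_mul_of_nonneg_right hcast (le_of_lt hq0)]
  · -- upper bound eventually
    filter_upwards [Filter.eventually_ge_atTop 1] with n hn1
    have hn0 : (0:ℝ) < (n:ℝ) := by exact_mod_cast hn1
    have hup : n + q * R k 2 n ≤ q * n + (k + 1) := R_upper k n hk
    have hupR : (n:ℝ) + (q:ℝ) * (R k 2 n : ℝ) ≤ (q:ℝ) * n + ((k:ℝ)+1) := by
      exact_mod_cast hup
    rw [div_le_iff₀ hn0]
    have hexp : (((q:ℝ)-1)/q + ((k:ℝ)+1)/q * (1/(n:ℝ))) * n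
        = (((q:ℝ)-1)*n + ((k:ℝ)+1))/q := by
      field_simp
    rw [hexp, le_div_iff₀ hq0]
    nlinarith [hupR]
end
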